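/- Let n_1,...,n_k be positive integers with n_i ≥ 2 for all i, and N = n_1 + ... + n_k. For each l ∈ [k], let U^l be the set of block vectors in R^N that are zero in all blocks except block l, where they equal e_i - e_{i+1} for i ∈ [n_l - 1]; and let V be the set of k block vectors that equal e_1 in block i and -e_1 in block i+1 (cyclically, with k+1 → 1) and zero elsewhere. Then the N vectors in (∪_{l=1}^k U^l) ∪ V are affinely independent. -/

import Mathlib

private lemma single_ite_sum {α : Type*} [Fintype α] [DecidableEq α]
    (c : α → Bool) (a : α) :
    ∑ q : α, (if c q then (Pi.single a (1:ℝ) : α → ℝ) q else 0) = if c a then 1 else 0 := by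
  rw [Finset.sum_eq_single a]
  · simp
  · intro q _ hq; simp [Pi.single_eq_of_ne hq]
  · simp

private lemma diff_ite_sum {α : Type*} [Fintype α] [DecidableEq α]
    (c : α → Bool) (a b : α) :
    ∑ q : α, (if c q then ((Pi.single a (1:ℝ) - Pi.single b 1 : α → ℝ)) q else 0)
      = (if c a then (1:ℝ) else 0) - (if c b then 1 else 0) := by
  have h : ∀ q, (if c q then ((Pi.single a (1:ℝ) - Pi.single b 1 : α → ℝ)) q else 0)
      = (if c q then (Pi.single a (1:ℝ) : α → ℝ) q else 0)
        - (if c q then (Pi.single b (1:ℝ) : α → ℝ) q else 0) := by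
    intro q; by_cases h : c q <;> simp [h]
  simp only [h, Finset.sum_sub_distrib, single_ite_sum]

private lemma funct_sum {ι α : Type*} [Fintype ι] [Fintype α]
    (W : ι → ℝ) (P : ι → α → ℝ) (hWs : ∑ i : ι, W i • P i = 0) (c : α → Bool) :
    ∑ i : ι, W i * (∑ q : α, if c q then P i q else 0) = 0 := by
  have h1 : ∀ q, ∑ i : ι, W i * P i q = 0 := by
    intro q
    have := congrFun hWs q
    simpa [Finset.sum_apply] using this
  calc ∑ i : ι, W i * ∑ q : α, (if c q then P i q else 0)
      = ∑ i : ι, ∑ q : α, (if c q then W i * P i q else 0) := by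
        refine Finset.sum_congr rfl fun i _ => ?_
        rw [Finset.mul_sum]
        exact Finset.sum_congr rfl fun q _ => by split <;> simp
    _ = ∑ q : α, ∑ i : ι, (if c q then W i * P i q else 0) := Finset.sum_comm
    _ = 0 := by
        refine Finset.sum_eq_zero fun q _ => ?_
        by_cases h : c q <;> simp [h, h1 q]


/-- Block vectors: within each block `l` of size `n l ≥ 2`, the vectors
`e_i - e_{i+1}` for `i ∈ [n l - 1]`, together with the `k` cyclic "linking"
vectors `e_1` (block `l`) minus `e_1` (block `l+1`), form `N = ∑ n l`
affinely independent vectors in `ℝ^N`. -/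
theorem stmt5 (k : ℕ) [NeZero k] (n : Fin k → ℕ) (hn : ∀ l, 2 ≤ n l) :
    AffineIndependent ℝ
      (Sum.elim
        (fun p : Σ l : Fin k, Fin (n l - 1) =>
          (Pi.single (⟨p.1, ⟨p.2.1, by have := p.2.2; omega⟩⟩ : Σ l : Fin k, Fin (n l)) (1 : ℝ)
            - Pi.single (⟨p.1, ⟨p.2.1 + 1, by have := p.2.2; omega⟩⟩ : Σ l : Fin k, Fin (n l)) 1
            : (Σ l : Fin k, Fin (n l)) → ℝ))
        (fun l : Fin k =>
          (Pi.single (⟨l, ⟨0, by have := hn l; omega⟩⟩ : Σ l : Fin k, Fin (n l)) (1 : ℝ)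
            - Pi.single (⟨l + 1, ⟨0, by have := hn (l + 1); omega⟩⟩ : Σ l : Fin k, Fin (n l)) 1
            : (Σ l : Fin k, Fin (n l)) → ℝ))) := by
  classical
  set P : ((Σ l : Fin k, Fin (n l - 1)) ⊕ Fin k) → ((Σ l : Fin k, Fin (n l)) → ℝ) :=
    (Sum.elim
        (fun p : Σ l : Fin k, Fin (n l - 1) =>
          (Pi.single (⟨p.1, ⟨p.2.1, by have := p.2.2; omega⟩⟩ : Σ l : Fin k, Fin (n l)) (1 : ℝ)
            - Pi.single (⟨p.1, ⟨p.2.1 + 1, by have := p.2.2; omega⟩⟩ : Σ l : Fin k, Fin (n l)) 1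
            : (Σ l : Fin k, Fin (n l)) → ℝ))
        (fun l : Fin k =>
          (Pi.single (⟨l, ⟨0, by have := hn l; omega⟩⟩ : Σ l : Fin k, Fin (n l)) (1 : ℝ)
            - Pi.single (⟨l + 1, ⟨0, by have := hn (l + 1); omega⟩⟩ : Σ l : Fin k, Fin (n l)) 1
            : (Σ l : Fin k, Fin (n l)) → ℝ))) with hP
  rw [affineIndependent_iff]
  intro s w hw0 hws
  set W : ((Σ l : Fin k, Fin (n l - 1)) ⊕ Fin k) → ℝ :=
    fun i => if i ∈ s then w i else 0 with hWdef
  have hW0 : ∑ i, W i = 0 := by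
    rw [← hw0]
    simp [hWdef, Finset.sum_ite_mem]
  have hWs : ∑ i, W i • P i = 0 := by
    rw [← hws]
    have : ∀ i, W i • P i = if i ∈ s then w i • P i else 0 := by
      intro i; by_cases h : i ∈ s <;> simp [hWdef, h]
    simp [this, Finset.sum_ite_mem]
  -- Step A: all block weights vanish
  have stepA : ∀ p0 : Σ l : Fin k, Fin (n l - 1), W (Sum.inl p0) = 0 := by
    rintro ⟨l0, i0⟩
    have hc := funct_sum W P hWs (fun q => decide (q.1 = l0 ∧ i0.1 + 1 ≤ q.2.1))
    rw [Fintype.sum_sum_type] at hc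
    simp only [hP, Sum.elim_inl, Sum.elim_inr, diff_ite_sum] at hc
    have hright : ∀ m : Fin k,
        W (Sum.inr m) *
          ((if decide (m = l0 ∧ i0.1 + 1 ≤ 0) then (1:ℝ) else 0)
            - (if decide (m + 1 = l0 ∧ i0.1 + 1 ≤ 0) then 1 else 0)) = 0 := by
      intro m; simp
    have hleft : ∑ p : Σ l : Fin k, Fin (n l - 1),
        W (Sum.inl p) *
          ((if decide (p.1 = l0 ∧ i0.1 + 1 ≤ p.2.1) then (1:ℝ) else 0)
            - (if decide (p.1 = l0 ∧ i0.1 + 1 ≤ p.2.1 + 1) then 1 else 0))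
        = - W (Sum.inl ⟨l0, i0⟩) := by
      rw [Finset.sum_eq_single (⟨l0, i0⟩ : Σ l : Fin k, Fin (n l - 1))]
      · simp
      · rintro ⟨l', i'⟩ _ hne
        by_cases hl : l' = l0
        · subst hl
          have hii : i'.1 ≠ i0.1 := by
            intro hv
            exact hne (by rw [Fin.ext hv])
          by_cases h1 : i0.1 + 1 ≤ i'.1
          · have h2 : i0.1 + 1 ≤ i'.1 + 1 := by omega
            simp [h1, h2]
          · have h2 : ¬ (i0.1 + 1 ≤ i'.1 + 1) := by omega
            simp [h1, h2]
        · simp [hl]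
      · simp
    rw [Finset.sum_congr rfl (fun m _ => hright m)] at hc
    rw [hleft] at hc
    simpa using hc
  -- Step B: cyclic relation among linking weights
  have stepB : ∀ l : Fin k, W (Sum.inr (l + 1)) = W (Sum.inr l) := by
    intro l
    have hc := funct_sum W P hWs (fun q => decide (q.1 = l + 1))
    rw [Fintype.sum_sum_type] at hc
    simp only [hP, Sum.elim_inl, Sum.elim_inr, diff_ite_sum] at hc
    have hleft : ∀ p : Σ l : Fin k, Fin (n l - 1),
        W (Sum.inl p) *
          ((if decide (p.1 = l + 1) then (1:ℝ) else 0)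
            - (if decide (p.1 = l + 1) then 1 else 0)) = 0 := by
      intro p; simp
    rw [Finset.sum_congr rfl (fun p _ => hleft p)] at hc
    have hright : ∑ m : Fin k,
        W (Sum.inr m) *
          ((if decide (m = l + 1) then (1:ℝ) else 0)
            - (if decide (m + 1 = l + 1) then 1 else 0))
        = W (Sum.inr (l + 1)) - W (Sum.inr l) := by
      have : ∀ m : Fin k, (m + 1 = l + 1) ↔ (m = l) := by
        intro m; constructor
        · intro h; exact add_right_cancel h
        · intro h; rw [h]
      simp only [this, mul_sub, Finset.sum_sub_distrib, mul_ite, mul_one, mul_zero,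
        decide_eq_true_eq]
      rw [Finset.sum_ite_eq' Finset.univ (l + 1), Finset.sum_ite_eq' Finset.univ l]
      simp
    rw [hright] at hc
    simp at hc
    linarith
  open Fin.NatCast in
  have hconst : ∀ m : Fin k, W (Sum.inr m) = W (Sum.inr 0) := by
    have hnat : ∀ j : ℕ, W (Sum.inr (j : Fin k)) = W (Sum.inr 0) := by
      intro j
      induction j with
      | zero => simp
      | succ j ih =>
        have : ((j + 1 : ℕ) : Fin k) = (j : Fin k) + 1 := by push_cast; ring
        rw [this, stepB, ih]
    intro m
    rw [← Fin.cast_val_eq_self m]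
    exact hnat m.1
  have hB0 : W (Sum.inr 0) = 0 := by
    rw [Fintype.sum_sum_type] at hW0
    rw [Finset.sum_congr rfl (fun p _ => stepA p)] at hW0
    rw [Finset.sum_congr rfl (fun m _ => hconst m)] at hW0
    rw [Finset.sum_const_zero, zero_add, Finset.sum_const, Finset.card_univ,
      Fintype.card_fin, nsmul_eq_mul] at hW0
    rcases mul_eq_zero.mp hW0 with h | h
    · exact absurd (Nat.cast_eq_zero.mp h) (NeZero.ne k)
    · exact h
  intro i hi
  have : w i = W i := by simp [hWdef, hi]
  rw [this]
  rcases i with p | m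
  · exact stepA p
  · rw [hconst m, hB0]
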